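/- Let V be a complete graph on N = 2K vertices (K ≥ 1) with a fixed partition V = V1 ∪ V2, |V1| = |V2| = K, with weights b(x,y) = t (0 < t < 1) if x ≠ y lie in the same part and b(x,y) = 1 if they lie in different parts. Then the dual Cheeger constant equals K/(K + (K−1)t), attained on the partition V1 ∪ V2. -/

import Mathlib

open Finset

set_option maxHeartbeats 1000000 in
theorem complete_bipartite_like_dual_cheeger
    {V : Type*} [Fintype V] [DecidableEq V] {F : Type*} [Field F] [LinearOrder F] [IsStrictOrderedRing F]
    (t : F) (ht : 0 < t) (ht1 : t < 1)
    (K : ℕ) (hK : 1 ≤ K) (hcard : Fintype.card V = 2 * K)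
    (P : V → Bool)
    (hP : (Finset.univ.filter (fun x => P x = true)).card = K)
    (b : V → V → F)
    (hb : ∀ x y, b x y = if x = y then 0 else if P x = P y then t else 1) :
    IsGreatest {r : F | ∃ U1 U2 : Finset V, U1.Nonempty ∧ U2.Nonempty ∧
      Disjoint U1 U2 ∧
      r = 2 * (∑ x ∈ U1, ∑ y ∈ U2, b x y) /
        ((∑ x ∈ U1, ∑ y, b x y) + (∑ x ∈ U2, ∑ y, b x y))}
      ((K : F) / ((K : F) + ((K : F) - 1) * t)) ∧
    2 * (∑ x ∈ Finset.univ.filter (fun x => P x = true),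
          ∑ y ∈ Finset.univ.filter (fun x => P x = false), b x y) /
        ((∑ x ∈ Finset.univ.filter (fun x => P x = true), ∑ y, b x y)
          + (∑ x ∈ Finset.univ.filter (fun x => P x = false), ∑ y, b x y))
      = (K : F) / ((K : F) + ((K : F) - 1) * t) := by
  have hK1 : (1:F) ≤ (K:F) := by exact_mod_cast hK
  set D : F := (K:F) + ((K:F)-1)*t with hD_def
  have hDpos : 0 < D := by nlinarith
  have hDne : D ≠ 0 := ne_of_gt hDpos
  have hcardF : (univ.filter (fun x => P x = false)).card = K := by
    have h := Finset.card_filter_add_card_filter_not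
      (s := (univ : Finset V)) (p := fun x => P x = true)
    simp only [hP, Finset.card_univ, hcard] at h
    have h2 : (univ.filter (fun x => ¬ P x = true)).card = K := by omega
    rw [← h2]
    congr 1
    ext x
    simp
  have hdeg : ∀ x : V, ∑ y, b x y = D := by
    intro x
    have hsame : (univ.filter (fun y => P y = P x)).card = K := by
      cases hx : P x with
      | false => exact hcardF
      | true => exact hP
    have hdiff : (univ.filter (fun y => ¬ P y = P x)).card = K := by
      have h := Finset.card_filter_add_card_filter_not
        (s := (univ : Finset V)) (p := fun y => P y = P x)
      simp only [hsame, Finset.card_univ, hcard] at h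
      omega
    have hxmem : x ∈ univ.filter (fun y => P y = P x) := by simp
    have hsplit := Finset.sum_filter_add_sum_filter_not (univ : Finset V)
      (fun y => P y = P x) (b x)
    have h1 : ∑ y ∈ univ.filter (fun y => P y = P x), b x y = ((K:F) - 1) * t := by
      rw [← Finset.add_sum_erase _ _ hxmem, hb x x, if_pos rfl, zero_add]
      have hconst : ∀ y ∈ (univ.filter (fun y => P y = P x)).erase x, b x y = t := by
        intro y hy
        simp only [Finset.mem_erase, Finset.mem_filter] at hy
        rw [hb, if_neg (fun h => hy.1 h.symm), if_pos hy.2.2.symm]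
      rw [Finset.sum_congr rfl hconst, Finset.sum_const,
        Finset.card_erase_of_mem hxmem, hsame, nsmul_eq_mul, Nat.cast_sub hK]
      push_cast
      ring
    have h2 : ∑ y ∈ univ.filter (fun y => ¬ P y = P x), b x y = (K:F) := by
      have hconst : ∀ y ∈ univ.filter (fun y => ¬ P y = P x), b x y = 1 := by
        intro y hy
        simp only [Finset.mem_filter] at hy
        have hxy : x ≠ y := fun h => hy.2 (h ▸ rfl)
        rw [hb, if_neg hxy, if_neg (fun h => hy.2 h.symm)]
      rw [Finset.sum_congr rfl hconst, Finset.sum_const, hdiff, nsmul_eq_mul, mul_one]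
    rw [← hsplit, h1, h2, hD_def]
    ring
  have hnum : ∑ x ∈ univ.filter (fun x => P x = true),
      ∑ y ∈ univ.filter (fun x => P x = false), b x y = (K:F) * (K:F) := by
    have hin : ∀ x ∈ univ.filter (fun x => P x = true),
        ∑ y ∈ univ.filter (fun x => P x = false), b x y = (K:F) := by
      intro x hx
      have hconst : ∀ y ∈ univ.filter (fun x => P x = false), b x y = 1 := by
        intro y hy
        simp only [Finset.mem_filter] at hx hy
        have hxy : x ≠ y := fun h => by rw [h, hy.2] at hx; exact Bool.noConfusion hx.2
        rw [hb, if_neg hxy, if_neg (by rw [hx.2, hy.2]; exact Bool.noConfusion)]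
      rw [Finset.sum_congr rfl hconst, Finset.sum_const, hcardF, nsmul_eq_mul, mul_one]
    rw [Finset.sum_congr rfl hin, Finset.sum_const, hP, nsmul_eq_mul]
  have hKpos : (0:F) < (K:F) := by linarith
  have hdegsum : ∀ U : Finset V, ∑ x ∈ U, ∑ y, b x y = (U.card : F) * D := by
    intro U
    rw [Finset.sum_congr rfl (fun x _ => hdeg x), Finset.sum_const, nsmul_eq_mul]
  have heq : 2 * (∑ x ∈ Finset.univ.filter (fun x => P x = true),
          ∑ y ∈ Finset.univ.filter (fun x => P x = false), b x y) /
        ((∑ x ∈ Finset.univ.filter (fun x => P x = true), ∑ y, b x y)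
          + (∑ x ∈ Finset.univ.filter (fun x => P x = false), ∑ y, b x y))
      = (K : F) / D := by
    rw [hnum, hdegsum, hdegsum, hP, hcardF]
    rw [div_eq_div_iff (by positivity) hDne]
    ring
  refine ⟨⟨⟨univ.filter (fun x => P x = true), univ.filter (fun x => P x = false),
    ?_, ?_, ?_, heq.symm⟩, ?_⟩, heq⟩
  · rw [← Finset.card_pos, hP]; omega
  · rw [← Finset.card_pos, hcardF]; omega
  · rw [Finset.disjoint_left]
    intro a ha hb'
    simp only [Finset.mem_filter] at ha hb'
    rw [ha.2] at hb'
    exact Bool.noConfusion hb'.2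
  · rintro r ⟨U1, U2, hU1, hU2, hdis, rfl⟩
    rw [hdegsum, hdegsum]
    have hn1 : (1:F) ≤ (U1.card : F) := by exact_mod_cast Finset.Nonempty.card_pos hU1
    have hn2 : (1:F) ≤ (U2.card : F) := by exact_mod_cast Finset.Nonempty.card_pos hU2
    have hsum : (U1.card : F) + (U2.card : F) ≤ 2 * (K:F) := by
      have h := Finset.card_le_univ (U1 ∪ U2)
      rw [Finset.card_union_of_disjoint hdis, hcard] at h
      exact_mod_cast h
    have hS : ∑ x ∈ U1, ∑ y ∈ U2, b x y ≤ (U1.card : F) * (U2.card : F) := by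
      have h1 : ∑ x ∈ U1, ∑ y ∈ U2, b x y ≤ ∑ x ∈ U1, ∑ y ∈ U2, (1:F) := by
        refine Finset.sum_le_sum (fun x hx => Finset.sum_le_sum (fun y hy => ?_))
        have hxy : x ≠ y := fun h => Finset.disjoint_left.mp hdis hx (h ▸ hy)
        rw [hb, if_neg hxy]
        split <;> linarith
      simpa [mul_comm] using h1
    set S : F := ∑ x ∈ U1, ∑ y ∈ U2, b x y with hS_def
    set n1 : F := (U1.card : F) with hn1_def
    set n2 : F := (U2.card : F) with hn2_def
    clear_value S n1 n2
    rw [div_le_div_iff₀ (by nlinarith) hDpos]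
    have key : 2 * (n1 * n2) ≤ (K:F) * (n1 + n2) := by
      nlinarith [sq_nonneg (n1 - n2),
        mul_nonneg (show (0:F) ≤ 2*(K:F) - (n1+n2) by linarith)
          (show (0:F) ≤ n1 + n2 by linarith)]
    clear_value D
    nlinarith [mul_le_mul_of_nonneg_right hS hDpos.le,
      mul_le_mul_of_nonneg_right key hDpos.le]
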